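/- Let Λ be a CPTP map on a finite-dimensional Hilbert space H such that for every pure state |φ⟩⟨φ|, Λ[|φ⟩⟨φ|] = |φ⟩⟨φ| ⊗ σ_φ for some density operator σ_φ on H_aux (universal perfect faithfulness). Then for every density operator ρ, tr(Λ[ρ]²) ≤ tr(ρ²), i.e., Λ does not increase the purity of any state. -/

import Mathlib

open Matrix Kronecker BigOperators
open scoped ComplexOrder

/-- Trace distance/norm with factor 1/2: `‖A‖ = ½ tr √(AᴴA)`. -/
noncomputable def trNorm {m : Type*} [Fintype m] [DecidableEq m] (A : Matrix m m ℂ) : ℝ :=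
  (1 / 2) * (((Matrix.posSemidef_conjTranspose_mul_self A).1.eigenvectorUnitary : Matrix m m ℂ) *
    diagonal (((↑) : ℝ → ℂ) ∘ (√·) ∘ (Matrix.posSemidef_conjTranspose_mul_self A).1.eigenvalues) *
    (star (Matrix.posSemidef_conjTranspose_mul_self A).1.eigenvectorUnitary : Matrix m m ℂ)).trace.re

/-- A density operator: positive semidefinite with unit trace. -/
def IsDensity {m : Type*} [Fintype m] (ρ : Matrix m m ℂ) : Prop :=
  ρ.PosSemidef ∧ ρ.trace = 1

/-- A pure state: a density operator that is a (rank-one) projector. -/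
def IsPureState {m : Type*} [Fintype m] (ρ : Matrix m m ℂ) : Prop :=
  IsDensity ρ ∧ ρ * ρ = ρ

/-- Completely positive trace-preserving map, via a Kraus representation. -/
def IsCPTP {m p : Type*} [Fintype m] [DecidableEq m] [Fintype p]
    (Λ : Matrix m m ℂ →ₗ[ℂ] Matrix p p ℂ) : Prop :=
  ∃ (ι : Type) (s : Finset ι) (K : ι → Matrix p m ℂ),
    (∀ ρ, Λ ρ = ∑ i ∈ s, K i * ρ * (K i)ᴴ) ∧ ∑ i ∈ s, (K i)ᴴ * K i = 1

/-- Partial trace over the second (auxiliary) tensor factor. -/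
noncomputable def ptraceB {m b : Type*} [Fintype b] (ρ : Matrix (m × b) (m × b) ℂ) :
    Matrix m m ℂ :=
  Matrix.of fun i j => ∑ k : b, ρ (i, k) (j, k)

/-- The projector `|χ⟩⟨χ|` onto the vector `χ`. -/
noncomputable def pureProj {m : Type*} (χ : m → ℂ) : Matrix m m ℂ :=
  Matrix.vecMulVec χ (star χ)

/-- `χ` lies in the range of `ρ`. -/
def inRange {m : Type*} [Fintype m] (ρ : Matrix m m ℂ) (χ : m → ℂ) : Prop :=
  ∃ v, ρ *ᵥ v = χ

/-- Worst-case distinguishability: infimum of trace distances of pure states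
taken from the ranges of `ρ` and `ρ'`. -/
noncomputable def wcd {m : Type*} [Fintype m] [DecidableEq m] (ρ ρ' : Matrix m m ℂ) : ℝ :=
  sInf { d : ℝ | ∃ χ χ' : m → ℂ, inRange ρ χ ∧ inRange ρ' χ' ∧
    star χ ⬝ᵥ χ = 1 ∧ star χ' ⬝ᵥ χ' = 1 ∧ d = trNorm (pureProj χ - pureProj χ') }


section PurityAux
open Matrix
set_option linter.unusedSectionVars false

variable {m : Type*} [Fintype m] [DecidableEq m]

lemma trace_vecMulVec' (u v : m → ℂ) : (vecMulVec u v).trace = v ⬝ᵥ u := by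
  simp [Matrix.trace, vecMulVec, dotProduct, Matrix.diag, mul_comm]

lemma vecMulVec_mul_vecMulVec' (u v w x : m → ℂ) :
    vecMulVec u v * vecMulVec w x = (v ⬝ᵥ w) • vecMulVec u x := by
  ext a b
  simp only [vecMulVec_apply, Matrix.mul_apply, Matrix.smul_apply, smul_eq_mul, dotProduct,
    Finset.sum_mul]
  refine Finset.sum_congr rfl fun c _ => by ring

lemma trace_pureProj_mul (u v : m → ℂ) :
    (pureProj u * pureProj v).trace = (star u ⬝ᵥ v) * (star v ⬝ᵥ u) := by
  rw [pureProj, pureProj, vecMulVec_mul_vecMulVec', Matrix.trace_smul, trace_vecMulVec',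
    smul_eq_mul]

lemma spectral_sum {A : Matrix m m ℂ} (hA : A.IsHermitian) :
    A = ∑ i, (hA.eigenvalues i : ℂ) • pureProj (⇑(hA.eigenvectorBasis i)) := by
  conv_lhs => rw [hA.spectral_theorem, Unitary.conjStarAlgAut_apply]
  ext a b
  simp only [Matrix.mul_apply, Matrix.sum_apply, Matrix.diagonal_apply, Function.comp_apply,
    Matrix.smul_apply, pureProj, vecMulVec_apply, Pi.star_apply, smul_eq_mul,
    IsHermitian.eigenvectorUnitary_apply, Matrix.star_apply, RCLike.star_def]
  refine Finset.sum_congr rfl fun i _ => ?_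
  simp only [mul_ite, mul_zero, Finset.sum_ite_eq', Finset.mem_univ, if_true]
  rw [mul_right_comm, mul_comm]
  rfl

lemma eigvec_ortho {A : Matrix m m ℂ} (hA : A.IsHermitian) (i j : m) :
    star ⇑(hA.eigenvectorBasis i) ⬝ᵥ ⇑(hA.eigenvectorBasis j) = if i = j then 1 else 0 := by
  have := orthonormal_iff_ite.mp hA.eigenvectorBasis.orthonormal i j
  rw [EuclideanSpace.inner_eq_star_dotProduct] at this
  rw [dotProduct_comm]
  simpa using this

lemma trace_sq_herm {A : Matrix m m ℂ} (hA : A.IsHermitian) :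
    (A * A).trace = ∑ i, ((hA.eigenvalues i : ℂ)) ^ 2 := by
  conv_lhs => rw [spectral_sum hA, Finset.sum_mul_sum]
  rw [Matrix.trace_sum]
  refine Finset.sum_congr rfl fun i _ => ?_
  rw [Matrix.trace_sum]
  have hterm : ∀ j, (((hA.eigenvalues i : ℂ)) • pureProj (⇑(hA.eigenvectorBasis i)) *
      (((hA.eigenvalues j : ℂ)) • pureProj (⇑(hA.eigenvectorBasis j)))).trace =
      if j = i then ((hA.eigenvalues i : ℂ)) ^ 2 else 0 := by
    intro j
    rw [smul_mul_smul_comm, Matrix.trace_smul, trace_pureProj_mul, eigvec_ortho, eigvec_ortho,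
      smul_eq_mul]
    by_cases h : j = i
    · subst h
      rw [if_pos rfl, if_pos rfl, pow_two]
      ring
    · rw [if_neg (fun hh => h hh.symm), if_neg h, if_neg h]
      ring
  rw [Finset.sum_congr rfl fun j _ => hterm j]
  simp

lemma trace_herm {A : Matrix m m ℂ} (hA : A.IsHermitian) :
    A.trace = ∑ i, (hA.eigenvalues i : ℂ) := by
  conv_lhs => rw [spectral_sum hA]
  rw [Matrix.trace_sum]
  refine Finset.sum_congr rfl fun i _ => ?_
  rw [Matrix.trace_smul, pureProj, trace_vecMulVec']
  have := eigvec_ortho hA i i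
  rw [this]
  simp

lemma density_purity_le_one {σ : Matrix m m ℂ} (hσ : IsDensity σ) :
    ((σ * σ).trace).re ≤ 1 := by
  obtain ⟨hpsd, ht⟩ := hσ
  have hh := hpsd.1
  have hnn : ∀ i, 0 ≤ hh.eigenvalues i := fun i => hpsd.eigenvalues_nonneg i
  have hsum : ∑ i, hh.eigenvalues i = 1 := by
    have := trace_herm hh
    rw [ht] at this
    have : ((∑ i, hh.eigenvalues i : ℝ) : ℂ) = ((1 : ℝ) : ℂ) := by
      push_cast
      rw [← this]
    exact_mod_cast this
  have hle1 : ∀ i, hh.eigenvalues i ≤ 1 := by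
    intro i
    rw [← hsum]
    exact Finset.single_le_sum (fun j _ => hnn j) (Finset.mem_univ i)
  rw [trace_sq_herm hh]
  have hre : (∑ i, ((hh.eigenvalues i : ℂ)) ^ 2).re = ∑ i, (hh.eigenvalues i) ^ 2 := by
    rw [Complex.re_sum]
    refine Finset.sum_congr rfl fun i _ => ?_
    rw [← Complex.ofReal_pow, Complex.ofReal_re]
  rw [hre, ← hsum]
  refine Finset.sum_le_sum fun i _ => ?_
  rw [pow_two]
  exact mul_le_of_le_one_right (hnn i) (hle1 i)

end PurityAux

/-- A universally perfectly faithful CPTP map (sending each pure state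
`|φ⟩⟨φ|` to `|φ⟩⟨φ| ⊗ σ_φ`) does not increase the purity `tr(ρ²)` of any state. -/
theorem universal_faithful_no_purity_increase {n a : Type*} [Fintype n] [DecidableEq n]
    [Fintype a]
    (Λ : Matrix n n ℂ →ₗ[ℂ] Matrix (n × a) (n × a) ℂ)
    (hCPTP : IsCPTP Λ)
    (hfaith : ∀ φ : n → ℂ, star φ ⬝ᵥ φ = 1 →
      ∃ σ : Matrix a a ℂ, IsDensity σ ∧ Λ (pureProj φ) = pureProj φ ⊗ₖ σ) :
    ∀ ρ : Matrix n n ℂ, IsDensity ρ → ((Λ ρ * Λ ρ).trace).re ≤ ((ρ * ρ).trace).re := by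
  intro ρ hρ
  classical
  have hherm := hρ.1.1
  have hunit : ∀ i, star ⇑(hherm.eigenvectorBasis i) ⬝ᵥ ⇑(hherm.eigenvectorBasis i) = 1 := by
    intro i
    have := eigvec_ortho hherm i i
    simpa using this
  choose σ hσdens hσeq using fun i => hfaith ⇑(hherm.eigenvectorBasis i) (hunit i)
  have hΛρ : Λ ρ = ∑ i, (hherm.eigenvalues i : ℂ) •
      (pureProj (⇑(hherm.eigenvectorBasis i)) ⊗ₖ σ i) := by
    conv_lhs => rw [spectral_sum hherm]
    rw [map_sum]
    refine Finset.sum_congr rfl fun i _ => ?_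
    rw [LinearMap.map_smul, hσeq]
  have key : (Λ ρ * Λ ρ).trace =
      ∑ i, ((hherm.eigenvalues i : ℂ)) ^ 2 * (σ i * σ i).trace := by
    rw [hΛρ, Finset.sum_mul_sum, Matrix.trace_sum]
    refine Finset.sum_congr rfl fun i _ => ?_
    rw [Matrix.trace_sum]
    have hterm : ∀ j, ((hherm.eigenvalues i : ℂ) •
        (pureProj (⇑(hherm.eigenvectorBasis i)) ⊗ₖ σ i) *
        ((hherm.eigenvalues j : ℂ) • (pureProj (⇑(hherm.eigenvectorBasis j)) ⊗ₖ σ j))).trace =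
        if j = i then ((hherm.eigenvalues i : ℂ)) ^ 2 * (σ i * σ i).trace else 0 := by
      intro j
      rw [smul_mul_smul_comm, Matrix.trace_smul, ← Matrix.mul_kronecker_mul,
        Matrix.trace_kronecker, trace_pureProj_mul, eigvec_ortho, eigvec_ortho, smul_eq_mul]
      by_cases h : j = i
      · subst h
        rw [if_pos rfl, if_pos rfl, pow_two]
        ring
      · rw [if_neg (fun hh => h hh.symm), if_neg h, if_neg h]
        ring
    rw [Finset.sum_congr rfl fun j _ => hterm j]
    simp
  rw [key, trace_sq_herm hherm, Complex.re_sum, Complex.re_sum]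
  refine Finset.sum_le_sum fun i _ => ?_
  rw [← Complex.ofReal_pow, Complex.re_ofReal_mul, Complex.ofReal_re]
  exact mul_le_of_le_one_right (sq_nonneg _) (density_purity_le_one (hσdens i))
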